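/- Let A be a unital C*-algebra, H a complex Hilbert space, and φ : A → B(H) a unital ℂ-linear map which is completely positive, i.e. Σ_{i,j=1}^n ⟨φ(x_i* x_j) ξ_j, ξ_i⟩ ≥ 0 for every n ∈ ℕ, all x₁,…,xₙ ∈ A and all ξ₁,…,ξₙ ∈ H. Then for all x, y ∈ A: (a) φ(x*x) − φ(x)*φ(x) is a positive operator (the Kadison–Choi–Schwarz inequality); and (b) ‖φ(y*x) − φ(y)*φ(x)‖ ≤ ‖φ(y*y) − φ(y)*φ(y)‖^{1/2} · ‖φ(x*x) − φ(x)*φ(x)‖^{1/2}. -/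

import Mathlib

open scoped ComplexOrder InnerProductSpace

/-- The Kadison–Choi–Schwarz inequality and its refinement for unital completely
positive maps `φ : A → B(H)` on a unital C*-algebra: `φ(x*x) ≥ φ(x)*φ(x)`, and
`‖φ(y*x) − φ(y)*φ(x)‖ ≤ ‖φ(y*y) − φ(y)*φ(y)‖^{1/2} ‖φ(x*x) − φ(x)*φ(x)‖^{1/2}`. -/
theorem kadison_choi_schwarz
    {A : Type*} [CStarAlgebra A]
    {H : Type*} [NormedAddCommGroup H] [InnerProductSpace ℂ H] [CompleteSpace H]
    (φ : A →ₗ[ℂ] (H →L[ℂ] H)) (hunital : φ 1 = 1)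
    (hcp : ∀ (n : ℕ) (x : Fin n → A) (ξ : Fin n → H),
        0 ≤ ∑ i, ∑ j, (inner ℂ (ξ i) (φ (star (x i) * x j) (ξ j)) : ℂ))
    (x y : A) :
    (φ (star x * x) - star (φ x) * φ x).IsPositive ∧
    ‖φ (star y * x) - star (φ y) * φ x‖ ≤
      Real.sqrt ‖φ (star y * y) - star (φ y) * φ y‖ *
        Real.sqrt ‖φ (star x * x) - star (φ x) * φ x‖ := by
  -- positivity on single elements
  have posφ : ∀ (a : A) (η : H), (0:ℂ) ≤ ⟪η, φ (star a * a) η⟫_ℂ := by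
    intro a η
    simpa using hcp 1 ![a] ![η]
  -- φ is star-preserving
  have hstar : ∀ a : A, φ (star a) = star (φ a) := by
    intro a
    have key : ∀ (c : ℂ) (ζ η : H),
        (0:ℂ) ≤ ⟪η, η⟫_ℂ + c * ⟪η, φ a ζ⟫_ℂ + (starRingEnd ℂ) c * ⟪ζ, φ (star a) η⟫_ℂ
          + (starRingEnd ℂ) c * c * ⟪ζ, φ (star a * a) ζ⟫_ℂ := by
      intro c ζ η
      have := hcp 2 ![1, a] ![η, c • ζ]
      simp only [Fin.sum_univ_two, Matrix.cons_val_zero, Matrix.cons_val_one, Matrix.head_cons,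
        star_one, one_mul, mul_one, hunital, map_smul, inner_smul_left, inner_smul_right,
        ContinuousLinearMap.one_apply, ContinuousLinearMap.smul_apply] at this
      exact le_of_le_of_eq this (by ring)
    rw [ContinuousLinearMap.star_eq_adjoint]
    ext η
    apply ext_inner_left ℂ
    intro ζ
    rw [ContinuousLinearMap.adjoint_inner_right, ← inner_conj_symm (φ a ζ) η]
    have h1 := (Complex.le_def.mp (key 1 ζ η)).2
    have hI := (Complex.le_def.mp (key Complex.I ζ η)).2
    have hγ : (⟪ζ, φ (star a * a) ζ⟫_ℂ).im = 0 := ((Complex.le_def.mp (posφ a ζ)).2).symm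
    have hη : (⟪η, η⟫_ℂ).im = 0 := by
      rw [inner_self_eq_norm_sq_to_K]; simp [pow_two, Complex.mul_im]
    set α := ⟪η, φ a ζ⟫_ℂ
    set β := ⟪ζ, φ (star a) η⟫_ℂ
    simp only [Complex.add_im, Complex.mul_im, Complex.one_re, Complex.one_im, Complex.zero_im,
      Complex.I_re, Complex.I_im, map_one, Complex.conj_I, Complex.neg_re, Complex.neg_im,
      Complex.mul_re, hγ, hη, Complex.I_mul_I] at h1 hI
    rw [Complex.ext_iff]
    constructor
    · simp only [Complex.conj_re]; linarith
    · simp only [Complex.conj_im]; linarith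
  set D : A → A → (H →L[ℂ] H) := fun a b => φ (star a * b) - star (φ a) * φ b with hD
  have hDapply : ∀ (a b : A) (η : H), D a b η = φ (star a * b) η - (φ a).adjoint (φ b η) := by
    intro a b η
    simp [hD, ContinuousLinearMap.star_eq_adjoint]
  have hDinner : ∀ (a b : A) (ζ η : H),
      ⟪ζ, D a b η⟫_ℂ = ⟪ζ, φ (star a * b) η⟫_ℂ - ⟪φ a ζ, φ b η⟫_ℂ := by
    intro a b ζ η
    rw [hDapply, inner_sub_right, ContinuousLinearMap.adjoint_inner_right]
  have hDsym : ∀ a b : A, star (D a b) = D b a := by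
    intro a b
    simp only [hD, star_sub, star_mul, star_star, ← hstar, star_mul, star_star]
  -- the key quadratic positivity
  have quad : ∀ (a b : A) (ζ₁ ζ₂ : H), (0:ℂ) ≤
      ⟪ζ₁, D a a ζ₁⟫_ℂ + ⟪ζ₁, D a b ζ₂⟫_ℂ + ⟪ζ₂, D b a ζ₁⟫_ℂ + ⟪ζ₂, D b b ζ₂⟫_ℂ := by
    intro a b ζ₁ ζ₂
    have h3 := hcp 3 ![1, a, b] ![-(φ a ζ₁ + φ b ζ₂), ζ₁, ζ₂]
    simp only [Fin.sum_univ_three, Matrix.cons_val_zero, Matrix.cons_val_one, Matrix.head_cons,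
      Matrix.cons_val_two, Matrix.tail_cons, star_one, one_mul, mul_one, hunital,
      ContinuousLinearMap.one_apply, map_neg, map_add, inner_neg_neg, inner_neg_left,
      inner_neg_right, inner_add_left, inner_add_right, hstar,
      ContinuousLinearMap.star_eq_adjoint, ContinuousLinearMap.adjoint_inner_right] at h3
    simp only [hDinner]
    exact h3.trans_eq (by ring)
  have Ppos : ∀ (a : A) (ζ : H), (0:ℂ) ≤ ⟪ζ, D a a ζ⟫_ℂ := by
    intro a ζ
    simpa using quad a a ζ 0
  -- Cauchy–Schwarz for the defect form
  have CS : ∀ (a b : A) (ζ₁ ζ₂ : H),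
      ‖⟪ζ₁, D a b ζ₂⟫_ℂ‖ ^ 2 ≤ (⟪ζ₁, D a a ζ₁⟫_ℂ).re * (⟪ζ₂, D b b ζ₂⟫_ℂ).re := by
    intro a b ζ₁ ζ₂
    set α := ⟪ζ₁, D a b ζ₂⟫_ℂ with hα
    set P := (⟪ζ₁, D a a ζ₁⟫_ℂ).re with hP
    set Q := (⟪ζ₂, D b b ζ₂⟫_ℂ).re with hQ
    have hP0 : 0 ≤ P := (Complex.le_def.mp (Ppos a ζ₁)).1
    have hQ0 : 0 ≤ Q := (Complex.le_def.mp (Ppos b ζ₂)).1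
    have hre : ∀ (z : ℂ), 0 ≤ z → z = ((z.re : ℝ) : ℂ) := by
      intro z hz
      have him := (Complex.le_def.mp hz).2
      exact Complex.ext (by simp) (by simp [← him])
    have hreal : ∀ t : ℝ, 0 ≤ Complex.normSq α * Q * (t * t) + -(2 * Complex.normSq α) * t + P := by
      intro t
      set c : ℂ := (-t : ℝ) * (starRingEnd ℂ) α with hc
      have hq := quad a b ζ₁ (c • ζ₂)
      have hba : ⟪ζ₂, D b a ζ₁⟫_ℂ = (starRingEnd ℂ) α := by
        rw [← hDsym a b, ContinuousLinearMap.star_eq_adjoint,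
          ContinuousLinearMap.adjoint_inner_right, ← inner_conj_symm, hα]
      simp only [ContinuousLinearMap.map_smul, inner_smul_left, inner_smul_right, hba] at hq
      rw [← hα, hre _ (Ppos a ζ₁), hre _ (Ppos b ζ₂), ← hP, ← hQ] at hq
      have hz : (0:ℂ) ≤ ((Complex.normSq α * Q * (t * t) + -(2 * Complex.normSq α) * t + P : ℝ) : ℂ) := by
        refine le_of_le_of_eq hq ?_
        simp only [hc, map_mul, map_neg, Complex.conj_conj, Complex.conj_ofReal]
        push_cast [Complex.normSq_eq_conj_mul_self]
        ring
      exact_mod_cast hz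
    by_cases hα0 : α = 0
    · rw [hα0]
      simpa using mul_nonneg hP0 hQ0
    · have hN : 0 < Complex.normSq α := Complex.normSq_pos.mpr hα0
      have hd := discrim_le_zero hreal
      rw [discrim] at hd
      have hle : Complex.normSq α ≤ P * Q := by nlinarith [hN, hd]
      calc ‖α‖ ^ 2 = Complex.normSq α := by
            rw [Complex.sq_norm]
        _ ≤ P * Q := hle
  -- bound the diagonal terms by operator norms
  have Pbound : ∀ (a : A) (ζ : H), (⟪ζ, D a a ζ⟫_ℂ).re ≤ ‖D a a‖ * ‖ζ‖ ^ 2 := by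
    intro a ζ
    calc (⟪ζ, D a a ζ⟫_ℂ).re ≤ ‖⟪ζ, D a a ζ⟫_ℂ‖ := Complex.re_le_norm _
      _ ≤ ‖ζ‖ * ‖D a a ζ‖ := norm_inner_le_norm _ _
      _ ≤ ‖ζ‖ * (‖D a a‖ * ‖ζ‖) := by
          gcongr
          exact (D a a).le_opNorm ζ
      _ = ‖D a a‖ * ‖ζ‖ ^ 2 := by ring
  have normIB : ∀ (a b : A) (ζ₁ ζ₂ : H), ‖⟪ζ₁, D a b ζ₂⟫_ℂ‖ ≤
      (Real.sqrt ‖D a a‖ * ‖ζ₁‖) * (Real.sqrt ‖D b b‖ * ‖ζ₂‖) := by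
    intro a b ζ₁ ζ₂
    have hP0 : 0 ≤ (⟪ζ₁, D a a ζ₁⟫_ℂ).re := (Complex.le_def.mp (Ppos a ζ₁)).1
    have hQ0 : 0 ≤ (⟪ζ₂, D b b ζ₂⟫_ℂ).re := (Complex.le_def.mp (Ppos b ζ₂)).1
    have h2 : ‖⟪ζ₁, D a b ζ₂⟫_ℂ‖ ^ 2 ≤ (‖D a a‖ * ‖ζ₁‖ ^ 2) * (‖D b b‖ * ‖ζ₂‖ ^ 2) := by
      refine (CS a b ζ₁ ζ₂).trans (mul_le_mul (Pbound a ζ₁) (Pbound b ζ₂) hQ0 ?_)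
      positivity
    have h3 : ‖⟪ζ₁, D a b ζ₂⟫_ℂ‖ ≤ Real.sqrt ((‖D a a‖ * ‖ζ₁‖ ^ 2) * (‖D b b‖ * ‖ζ₂‖ ^ 2)) :=
      (Real.le_sqrt (norm_nonneg _) (by positivity)).mpr h2
    refine h3.trans_eq ?_
    rw [Real.sqrt_mul (by positivity), Real.sqrt_mul (norm_nonneg _),
      Real.sqrt_mul (norm_nonneg _), Real.sqrt_sq (norm_nonneg _), Real.sqrt_sq (norm_nonneg _)]
  -- final norm bound
  have main : ∀ η : H, ‖(D y x) η‖ ≤ (Real.sqrt ‖D y y‖ * Real.sqrt ‖D x x‖) * ‖η‖ := by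
    intro η
    rcases eq_or_lt_of_le (norm_nonneg ((D y x) η)) with h0 | h0
    · rw [← h0]
      positivity
    · have h := normIB y x ((D y x) η) η
      have hw : ‖(D y x) η‖ ^ 2 ≤ ‖⟪(D y x) η, (D y x) η⟫_ℂ‖ := by
        have h5 : RCLike.re ⟪(D y x) η, (D y x) η⟫_ℂ = ‖(D y x) η‖ ^ 2 := inner_self_eq_norm_sq _
        rw [RCLike.re_to_complex] at h5
        rw [← h5]
        exact Complex.re_le_norm _
      have h6 := hw.trans h
      nlinarith [h6, h0]
  have hxx : φ (star x * x) - star (φ x) * φ x = D x x := by simp only [hD]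
  have hyy : φ (star y * y) - star (φ y) * φ y = D y y := by simp only [hD]
  have hyx : φ (star y * x) - star (φ y) * φ x = D y x := by simp only [hD]
  rw [hxx, hyy, hyx]
  refine ⟨⟨ContinuousLinearMap.isSelfAdjoint_iff_isSymmetric.mp (hDsym x x), ?_⟩, ?_⟩
  · intro ζ
    rw [ContinuousLinearMap.reApplyInnerSelf_apply, ← inner_conj_symm (D x x ζ) ζ]
    rw [RCLike.re_to_complex, Complex.conj_re]
    exact (Complex.le_def.mp (Ppos x ζ)).1
  · exact ContinuousLinearMap.opNorm_le_bound _ (by positivity) main
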